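/- With the coefficients c_1 = 0 and c_i = 1/(i+1) for i = 2, ..., 6 (i.e. c_2 = 1/3, c_3 = 1/4, c_4 = 1/5, c_5 = 1/6, c_6 = 1/7) and b_1 = -43/12, b_2 = 81/32, b_3 = -704/9, b_4 = 23125/48, b_5 = -810, b_6 = 117649/288, one has \sum_{i=1}^6 b_i c_i^k = 1/k! for every k = 0, 1, ..., 5; consequently r(x) = b_1 + \sum_{i=2}^6 b_i/(1 - c_i x) satisfies r(x) - e^x = O(x^6) as x \to 0. -/

import Mathlib

private lemma frac_exp_key (x : ℝ) (h3 : (0:ℝ) < 1 - 1/3 * x) (h4 : (0:ℝ) < 1 - 1/4 * x)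
    (h5 : (0:ℝ) < 1 - 1/5 * x) (h6 : (0:ℝ) < 1 - 1/6 * x) (h7 : (0:ℝ) < 1 - 1/7 * x) :
    (-43/12 + (81/32 / (1 - 1/3 * x) + (-704/9) / (1 - 1/4 * x) + 23125/48 / (1 - 1/5 * x)
      + (-810) / (1 - 1/6 * x) + 117649/288 / (1 - 1/7 * x)))
        = (1 + x + x^2/2 + x^3/6 + x^4/24 + x^5/120) +
          x^6 * (19/14400 - 13/10080*x + x^2/2160 - x^3/15120 + x^4/302400)
          / ((1 - 1/3*x)*(1 - 1/4*x)*(1 - 1/5*x)*(1 - 1/6*x)*(1 - 1/7*x)) := by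
  set Q : ℝ := (1 - 1/3*x)*(1 - 1/4*x)*(1 - 1/5*x)*(1 - 1/6*x)*(1 - 1/7*x) with hQdef
  have hQpos : 0 < Q := by rw [hQdef]; positivity
  have hQne : Q ≠ 0 := hQpos.ne'
  have t0 : (-43:ℝ)/12 = (-43/12) * Q / Q := by rw [mul_div_cancel_right₀ _ hQne]
  have t3 : (81:ℝ)/32 / (1 - 1/3*x)
      = 81/32 * ((1-1/4*x)*(1-1/5*x)*(1-1/6*x)*(1-1/7*x)) / Q := by
    rw [div_eq_div_iff h3.ne' hQne, hQdef]; ring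
  have t4 : (-704:ℝ)/9 / (1 - 1/4*x)
      = -704/9 * ((1-1/3*x)*(1-1/5*x)*(1-1/6*x)*(1-1/7*x)) / Q := by
    rw [div_eq_div_iff h4.ne' hQne, hQdef]; ring
  have t5 : (23125:ℝ)/48 / (1 - 1/5*x)
      = 23125/48 * ((1-1/3*x)*(1-1/4*x)*(1-1/6*x)*(1-1/7*x)) / Q := by
    rw [div_eq_div_iff h5.ne' hQne, hQdef]; ring
  have t6 : (-810:ℝ) / (1 - 1/6*x)
      = -810 * ((1-1/3*x)*(1-1/4*x)*(1-1/5*x)*(1-1/7*x)) / Q := by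
    rw [div_eq_div_iff h6.ne' hQne, hQdef]; ring
  have t7 : (117649:ℝ)/288 / (1 - 1/7*x)
      = 117649/288 * ((1-1/3*x)*(1-1/4*x)*(1-1/5*x)*(1-1/6*x)) / Q := by
    rw [div_eq_div_iff h7.ne' hQne, hQdef]; ring
  rw [t0, t3, t4, t5, t6, t7]
  simp only [← add_div]
  have hrhs : (1 + x + x^2/2 + x^3/6 + x^4/24 + x^5/120) +
      x^6 * (19/14400 - 13/10080*x + x^2/2160 - x^3/15120 + x^4/302400) / Q
      = ((1 + x + x^2/2 + x^3/6 + x^4/24 + x^5/120) * Q +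
          x^6 * (19/14400 - 13/10080*x + x^2/2160 - x^3/15120 + x^4/302400)) / Q := by
    rw [add_div, mul_div_cancel_right₀ _ hQne]
  rw [hrhs, div_eq_div_iff hQne hQne, hQdef]
  ring

private lemma frac_exp_Qbound (x : ℝ) (hl : -(1/2) ≤ x) (hr : x ≤ 1/2) :
    (1:ℝ)/3 ≤ (1 - 1/3*x)*(1 - 1/4*x)*(1 - 1/5*x)*(1 - 1/6*x)*(1 - 1/7*x) := by
  have h3 : (0:ℝ) < 1 - 1/3 * x := by linarith
  have h4 : (0:ℝ) < 1 - 1/4 * x := by linarith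
  have h5 : (0:ℝ) < 1 - 1/5 * x := by linarith
  have h6 : (0:ℝ) < 1 - 1/6 * x := by linarith
  nlinarith [mul_pos h3 h4, mul_pos (mul_pos h3 h4) h5,
    mul_pos (mul_pos (mul_pos h3 h4) h5) h6]

private lemma frac_exp_Sbound (x : ℝ) (hl : -(1/2) ≤ x) (hr : x ≤ 1/2) :
    |19/14400 - 13/10080*x + x^2/2160 - x^3/15120 + x^4/302400| ≤ (1:ℝ)/300 := by
  rw [abs_le]
  constructor <;>
    nlinarith [sq_nonneg x, sq_nonneg (x^2), sq_nonneg (x-1), sq_nonneg (x+1)]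

/-- The 5th-order fractional approximation to the exponential: with `c₁ = 0`,
`cᵢ = 1/(i+1)` for `i = 2, …, 6`, and
`b = (-43/12, 81/32, -704/9, 23125/48, -810, 117649/288)`, one has
`∑ᵢ bᵢ cᵢᵏ = 1/k!` for `k = 0, …, 5`, and hence
`r(x) = b₁ + ∑_{i=2}^{6} bᵢ/(1 - cᵢ x)` approximates `eˣ` to order 5 at the origin. -/
theorem fractional_exp_order5_coeffs :
    let c : Fin 6 → ℝ := ![0, 1/3, 1/4, 1/5, 1/6, 1/7]
    let b : Fin 6 → ℝ := ![-43/12, 81/32, -704/9, 23125/48, -810, 117649/288]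
    (∀ k : ℕ, k ≤ 5 → ∑ i, b i * c i ^ k = 1 / (k.factorial : ℝ)) ∧
      ∃ C > (0 : ℝ), ∃ δ > (0 : ℝ), ∀ x : ℝ, |x| < δ →
        |(b 0 + ∑ i : Fin 5, b i.succ / (1 - c i.succ * x)) - Real.exp x| ≤
          C * |x| ^ 6 := by
  intro c b
  have hb0 : b 0 = -43/12 := rfl
  have hb1 : b 1 = 81/32 := rfl
  have hb2 : b 2 = -704/9 := rfl
  have hb3 : b 3 = 23125/48 := rfl
  have hb4 : b 4 = -810 := rfl
  have hb5 : b 5 = 117649/288 := rfl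
  have hc0 : c 0 = 0 := rfl
  have hc1 : c 1 = 1/3 := rfl
  have hc2 : c 2 = 1/4 := rfl
  have hc3 : c 3 = 1/5 := rfl
  have hc4 : c 4 = 1/6 := rfl
  have hc5 : c 5 = 1/7 := rfl
  constructor
  · intro k hk
    interval_cases k <;>
      · simp only [Fin.sum_univ_six, hb0, hb1, hb2, hb3, hb4, hb5,
          hc0, hc1, hc2, hc3, hc4, hc5, Nat.factorial]
        norm_num
  · refine ⟨1, one_pos, 1/2, by norm_num, fun x hx => ?_⟩
    have hx1 : |x| ≤ 1/2 := le_of_lt hx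
    obtain ⟨hl, hr⟩ := abs_le.mp hx1
    have h3 : (0:ℝ) < 1 - 1/3 * x := by linarith
    have h4 : (0:ℝ) < 1 - 1/4 * x := by linarith
    have h5 : (0:ℝ) < 1 - 1/5 * x := by linarith
    have h6 : (0:ℝ) < 1 - 1/6 * x := by linarith
    have h7 : (0:ℝ) < 1 - 1/7 * x := by linarith
    have hT := Real.exp_bound (x := x) (by linarith [abs_nonneg x] : |x| ≤ 1)
      (by norm_num : 0 < 6)
    have hsum : ∑ i ∈ Finset.range 6, x ^ i / (i.factorial : ℝ)
        = 1 + x + x^2/2 + x^3/6 + x^4/24 + x^5/120 := by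
      simp [Finset.sum_range_succ, Nat.factorial]
      try ring
    rw [hsum] at hT
    have hT' : |Real.exp x - (1 + x + x^2/2 + x^3/6 + x^4/24 + x^5/120)|
        ≤ |x| ^ 6 * (7/4320) := by
      convert hT using 2
      norm_num [Nat.factorial]
    have hLHS : (b 0 + ∑ i : Fin 5, b i.succ / (1 - c i.succ * x))
        = -43/12 + (81/32 / (1 - 1/3 * x) + (-704/9) / (1 - 1/4 * x)
          + 23125/48 / (1 - 1/5 * x) + (-810) / (1 - 1/6 * x)
          + 117649/288 / (1 - 1/7 * x)) := by
      rw [Fin.sum_univ_five]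
      rfl
    set S : ℝ := 19/14400 - 13/10080*x + x^2/2160 - x^3/15120 + x^4/302400 with hSdef
    set Q : ℝ := (1 - 1/3*x)*(1 - 1/4*x)*(1 - 1/5*x)*(1 - 1/6*x)*(1 - 1/7*x) with hQdef
    have hQpos : 0 < Q := by rw [hQdef]; positivity
    have hQ : (1:ℝ)/3 ≤ Q := hQdef ▸ frac_exp_Qbound x hl hr
    have hS : |S| ≤ 1/300 := hSdef ▸ frac_exp_Sbound x hl hr
    have key : (b 0 + ∑ i : Fin 5, b i.succ / (1 - c i.succ * x))
        = (1 + x + x^2/2 + x^3/6 + x^4/24 + x^5/120) + x^6 * S / Q := by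
      rw [hLHS, hSdef, hQdef]
      exact frac_exp_key x h3 h4 h5 h6 h7
    rw [key]
    have hE : |x^6 * S / Q| ≤ |x|^6 * (1/100) := by
      rw [abs_div, abs_mul, abs_of_pos hQpos, abs_pow, div_le_iff₀ hQpos]
      calc |x|^6 * |S| ≤ |x|^6 * (1/300) :=
            mul_le_mul_of_nonneg_left hS (by positivity)
        _ = |x|^6 * (1/100) * (1/3) := by ring
        _ ≤ |x|^6 * (1/100) * Q :=
            mul_le_mul_of_nonneg_left hQ (by positivity)
    calc |(1 + x + x^2/2 + x^3/6 + x^4/24 + x^5/120) + x^6 * S / Q - Real.exp x|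
        = |x^6 * S / Q - (Real.exp x - (1 + x + x^2/2 + x^3/6 + x^4/24 + x^5/120))| := by
          ring_nf
      _ ≤ |x^6 * S / Q| + |Real.exp x - (1 + x + x^2/2 + x^3/6 + x^4/24 + x^5/120)| :=
          abs_sub _ _
      _ ≤ |x|^6 * (1/100) + |x|^6 * (7/4320) := add_le_add hE hT'
      _ ≤ 1 * |x|^6 := by
            have h6 := pow_nonneg (abs_nonneg x) 6
            linarith
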